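/- arXiv:2504.21125 — 3 statements merged into one kernel-verified Lean document; each statement's English description precedes it below -/
import Mathlib

section
/- Let T be a triangulated category and S a full subcategory. Define ⟨S⟩₀ = add(0), ⟨S⟩₁ = add(S) (closure under shifts, finite coproducts, retracts), and inductively ⟨S⟩ₙ = add{cone(φ) : φ a morphism from an object of ⟨S⟩ₙ₋₁ to an object of ⟨S⟩₁}. Then the subcategories form an increasing chain ⟨S⟩₀ ⊆ ⟨S⟩₁ ⊆ ⟨S⟩₂ ⊆ ⋯ whose union equals ⟨S⟩, the smallest thick subcategory of T containing S. -/
open CategoryTheory Limits Pretriangulated Opposite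

universe w v u

namespace Paper

variable {C : Type u} [Category.{v} C] [Preadditive C] [HasZeroObject C]
  [HasShift C ℤ] [∀ n : ℤ, (shiftFunctor C n).Additive] [Pretriangulated C]
  [HasBinaryBiproducts C]

/-- `add S`: smallest strictly full subcategory containing `S` closed under shifts,
finite coproducts and retracts. -/
inductive addClosure (S : Set C) : C → Prop
  | of {X : C} (h : X ∈ S) : addClosure S X
  | zero {X : C} (h : IsZero X) : addClosure S X
  | iso {X Y : C} (e : X ≅ Y) (h : addClosure S X) : addClosure S Y
  | shift {X : C} (n : ℤ) (h : addClosure S X) : addClosure S (X⟦n⟧)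
  | biprod {X Y : C} (hX : addClosure S X) (hY : addClosure S Y) : addClosure S (X ⊞ Y)
  | retract {X Y : C} (i : X ⟶ Y) (r : Y ⟶ X) (hir : i ≫ r = 𝟙 X) (h : addClosure S Y) :
      addClosure S X

/-- objects arising as the cone of a morphism from an object of `A` to an object of `B`,
i.e. `E` with a distinguished triangle `X → Y → E → X[1]`, `X ∈ A`, `Y ∈ B`. -/
def coneSet (A B : Set C) : Set C :=
  {E | ∃ (X Y : C) (f : X ⟶ Y) (g : Y ⟶ E) (h : E ⟶ X⟦(1:ℤ)⟧),
      Triangle.mk f g h ∈ (distTriang C) ∧ X ∈ A ∧ Y ∈ B}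

/-- The level filtration `⟨S⟩ₙ`. -/
def level (S : Set C) : ℕ → Set C
  | 0 => addClosure (∅ : Set C)
  | 1 => addClosure S
  | (n+2) => addClosure (coneSet (level S (n+1)) (addClosure S))

/-- A thick subcategory: triangulated subcategory closed under retracts. -/
structure IsThick (S : Set C) : Prop where
  zero : ∀ X : C, IsZero X → X ∈ S
  iso : ∀ {X Y : C}, (X ≅ Y) → X ∈ S → Y ∈ S
  shift : ∀ (X : C) (n : ℤ), X ∈ S → X⟦n⟧ ∈ S
  ext₂ : ∀ T : Triangle C, T ∈ (distTriang C) → T.obj₁ ∈ S → T.obj₃ ∈ S → T.obj₂ ∈ S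
  retract : ∀ {X Y : C} (i : X ⟶ Y) (r : Y ⟶ X), i ≫ r = 𝟙 X → Y ∈ S → X ∈ S

/-- `⟨S⟩`, the smallest thick subcategory of `C` containing `S`. -/
def thickClosure (S : Set C) : Set C :=
  {X | ∀ T : Set C, IsThick T → S ⊆ T → X ∈ T}

end Paper

namespace PaperProof

open Paper CategoryTheory.Category ZeroObject

variable {C : Type u} [Category.{v} C] [Preadditive C] [HasZeroObject C]
  [HasShift C ℤ] [∀ n : ℤ, (shiftFunctor C n).Additive] [Pretriangulated C]
  [HasBinaryBiproducts C]

lemma addClosure_mono {S T : Set C} (h : S ⊆ T) {X : C} (hX : addClosure S X) :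
    addClosure T X := by
  induction hX with
  | of h' => exact .of (h h')
  | zero h' => exact .zero h'
  | iso e _ ih => exact .iso e ih
  | shift n _ ih => exact .shift n ih
  | biprod _ _ ih1 ih2 => exact .biprod ih1 ih2
  | retract i r hir _ ih => exact .retract i r hir ih

lemma coneSet_mono {A A' B : Set C} (h : A ⊆ A') : coneSet A B ⊆ coneSet A' B := by
  rintro E ⟨X, Y, f, g, hh, hd, hX, hY⟩
  exact ⟨X, Y, f, g, hh, hd, h hX, hY⟩

lemma level_eq_addClosure (S : Set C) : ∀ n : ℕ, ∃ G : Set C, level S n = addClosure G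
  | 0 => ⟨∅, rfl⟩
  | 1 => ⟨S, rfl⟩
  | (n+2) => ⟨_, rfl⟩

section levelClosure

variable {S : Set C} {n : ℕ}

lemma level_iso {X Y : C} (e : X ≅ Y) (hX : X ∈ level S n) : Y ∈ level S n := by
  obtain ⟨G, hG⟩ := level_eq_addClosure S n
  rw [hG] at hX ⊢
  exact .iso e hX

lemma level_shift {X : C} (m : ℤ) (hX : X ∈ level S n) : X⟦m⟧ ∈ level S n := by
  obtain ⟨G, hG⟩ := level_eq_addClosure S n
  rw [hG] at hX ⊢
  exact .shift m hX

lemma level_zero {X : C} (hX : IsZero X) : X ∈ level S n := by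
  obtain ⟨G, hG⟩ := level_eq_addClosure S n
  rw [hG]
  exact .zero hX

lemma level_biprod {X Y : C} (hX : X ∈ level S n) (hY : Y ∈ level S n) :
    (X ⊞ Y) ∈ level S n := by
  obtain ⟨G, hG⟩ := level_eq_addClosure S n
  rw [hG] at hX hY ⊢
  exact .biprod hX hY

lemma level_retract {X Y : C} (i : X ⟶ Y) (r : Y ⟶ X) (hir : i ≫ r = 𝟙 X)
    (hY : Y ∈ level S n) : X ∈ level S n := by
  obtain ⟨G, hG⟩ := level_eq_addClosure S n
  rw [hG] at hY ⊢
  exact .retract i r hir hY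

end levelClosure

lemma level_mono_succ (S : Set C) : ∀ n : ℕ, level S n ⊆ level S (n+1)
  | 0 => fun X hX => addClosure_mono (Set.empty_subset S) hX
  | 1 => fun X hX => by
      refine addClosure_mono (fun Y hY => ?_) hX
      refine ⟨(0 : C)⟦(-1:ℤ)⟧, Y, ((contractibleTriangle Y).invRotate).mor₁,
        ((contractibleTriangle Y).invRotate).mor₂, ((contractibleTriangle Y).invRotate).mor₃,
        inv_rot_of_distTriang _ (contractible_distinguished Y), ?_, .of hY⟩
      exact level_zero ((shiftFunctor C (-1:ℤ)).map_isZero (isZero_zero C))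
  | (n+2) => fun X hX =>
      addClosure_mono (coneSet_mono (level_mono_succ S (n+1))) hX

lemma level_mono (S : Set C) {m n : ℕ} (h : m ≤ n) : level S m ⊆ level S n := by
  induction h with
  | refl => exact fun _ h => h
  | step _ ih => exact fun X hX => level_mono_succ S _ (ih hX)

/-! ### Auxiliary biproduct isomorphisms -/

noncomputable def biprodIsoOfIsZero (X Z : C) (hZ : IsZero Z) : X ⊞ Z ≅ X where
  hom := biprod.fst
  inv := biprod.lift (𝟙 X) 0
  hom_inv_id := by
    apply biprod.hom_ext
    · simp
    · exact hZ.eq_of_tgt _ _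
  inv_hom_id := by simp

noncomputable def biprodPiIso (f : WalkingPair → C) [HasProduct f] :
    (f WalkingPair.left ⊞ f WalkingPair.right) ≅ ∏ᶜ f where
  hom := Pi.lift (fun j => match j with
    | WalkingPair.left => biprod.fst
    | WalkingPair.right => biprod.snd)
  inv := biprod.lift (Pi.π f WalkingPair.left) (Pi.π f WalkingPair.right)
  hom_inv_id := by
    apply biprod.hom_ext <;> simp
  inv_hom_id := by
    apply Pi.hom_ext
    rintro (_|_) <;> simp

/-- The direct sum of two distinguished triangles is distinguished. -/
lemma sum_distinguished (T₁ T₂ : Triangle C) (h₁ : T₁ ∈ distTriang C)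
    (h₂ : T₂ ∈ distTriang C) :
    ∃ k, Triangle.mk (biprod.map T₁.mor₁ T₂.mor₁) (biprod.map T₁.mor₂ T₂.mor₂) k
      ∈ distTriang C := by
  let T : WalkingPair → Triangle C := fun j => match j with
    | WalkingPair.left => T₁
    | WalkingPair.right => T₂
  have hT : ∀ j, T j ∈ distTriang C := by rintro (_|_) <;> assumption
  have hP := productTriangle_distinguished T hT
  let e₁ := biprodPiIso (fun j => (T j).obj₁)
  let e₂ := biprodPiIso (fun j => (T j).obj₂)
  let e₃ := biprodPiIso (fun j => (T j).obj₃)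
  refine ⟨e₃.hom ≫ (productTriangle T).mor₃ ≫ e₁.inv⟦(1:ℤ)⟧',
    isomorphic_distinguished _ hP _ ?_⟩
  refine Triangle.isoMk _ _ e₁ e₂ e₃ ?_ ?_ ?_
  · change biprod.map (T WalkingPair.left).mor₁ (T WalkingPair.right).mor₁ ≫ e₂.hom =
      e₁.hom ≫ Limits.Pi.map (fun j => (T j).mor₁)
    apply Pi.hom_ext
    rintro (_|_) <;> simp [e₁, e₂, biprodPiIso, T]
  · change biprod.map (T WalkingPair.left).mor₂ (T WalkingPair.right).mor₂ ≫ e₃.hom =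
      e₂.hom ≫ Limits.Pi.map (fun j => (T j).mor₂)
    apply Pi.hom_ext
    rintro (_|_) <;> simp [e₂, e₃, biprodPiIso, T]
  · change (e₃.hom ≫ (Limits.Pi.map (fun j => (T j).mor₃) ≫
      inv (piComparison (shiftFunctor C (1:ℤ)) (fun j => (T j).obj₁))) ≫ e₁.inv⟦(1:ℤ)⟧') ≫
      e₁.hom⟦(1:ℤ)⟧' = e₃.hom ≫ (Limits.Pi.map (fun j => (T j).mor₃) ≫
      inv (piComparison (shiftFunctor C (1:ℤ)) (fun j => (T j).obj₁)))
    simp only [Triangle.mk_mor₃, assoc, ← CategoryTheory.Functor.map_comp, Iso.inv_hom_id,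
      CategoryTheory.Functor.map_id, comp_id]

/-! ### The key predicate -/

/-- `Good S A` : every extension of an object of the union of the levels by `A`
belongs to the union of the levels. -/
def Good (S : Set C) (A : C) : Prop :=
  ∀ (Y B : C) (f : A ⟶ Y) (g : Y ⟶ B) (h : B ⟶ A⟦(1:ℤ)⟧),
    Triangle.mk f g h ∈ (distTriang C) → (∃ b, B ∈ level S b) → ∃ m, Y ∈ level S m

lemma Good.of_add {S : Set C} {A : C} (hA : addClosure S A) : Good S A := by
  intro Y B f g h hT ⟨b, hB⟩
  refine ⟨b + 2, ?_⟩
  show addClosure (coneSet (level S (b+1)) (addClosure S)) Y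
  refine .of ⟨B⟦(-1:ℤ)⟧, A, ((Triangle.mk f g h).invRotate).mor₁,
    ((Triangle.mk f g h).invRotate).mor₂, ((Triangle.mk f g h).invRotate).mor₃,
    inv_rot_of_distTriang _ hT, ?_, hA⟩
  exact level_shift _ (level_mono_succ S b hB)

lemma Good.iso {S : Set C} {A A' : C} (hA : Good S A) (e : A ≅ A') : Good S A' := by
  intro Y B f g h hT hB
  have hT₀ : Triangle.mk (e.hom ≫ f) g (h ≫ e.inv⟦(1:ℤ)⟧') ∈ distTriang C := by
    refine isomorphic_distinguished _ hT _ ?_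
    refine Triangle.isoMk _ _ e (Iso.refl _) (Iso.refl _) (by exact comp_id _)
      (by exact (comp_id g).trans (id_comp g).symm) ?_
    dsimp
    change (h ≫ e.inv⟦(1:ℤ)⟧') ≫ e.hom⟦(1:ℤ)⟧' = 𝟙 B ≫ h
    simp only [assoc, ← CategoryTheory.Functor.map_comp, Iso.inv_hom_id]
    simp
  exact hA _ _ _ _ _ hT₀ hB

lemma Good.shift {S : Set C} {A : C} (hA : Good S A) (n : ℤ) : Good S (A⟦n⟧) := by
  intro Y B f g h hT hB
  have hA' : Good S (A⟦n⟧⟦-n⟧) :=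
    hA.iso ((shiftFunctorCompIsoId C n (-n) (add_neg_cancel n)).symm.app A)
  have hT' := Triangle.shift_distinguished _ hT (-n)
  rw [Triangle.shiftFunctor_eq] at hT'
  obtain ⟨m, hm⟩ := hA' _ _ _ _ _ hT' ⟨hB.choose, level_shift (-n) hB.choose_spec⟩
  refine ⟨m, level_iso ((shiftFunctorCompIsoId C (-n) n (neg_add_cancel n)).app Y)
    (level_shift n hm)⟩

lemma Good.retract {S : Set C} {A A' : C} (hA' : Good S A') (i : A ⟶ A') (r : A' ⟶ A)
    (hir : i ≫ r = 𝟙 A) : Good S A := by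
  intro Y B f g h hT hB
  obtain ⟨Y', f', g', hT'⟩ := distinguished_cocone_triangle₂ (h ≫ i⟦(1:ℤ)⟧')
  obtain ⟨φ, hφ₁, hφ₂⟩ : ∃ φ : Y ⟶ Y', f ≫ φ = i ≫ f' ∧ g ≫ 𝟙 B = φ ≫ g' :=
    complete_distinguished_triangle_morphism₂ _ _ hT hT' i (𝟙 B)
    (by exact (id_comp _).symm)
  obtain ⟨ψ, hψ₁, hψ₂⟩ : ∃ ψ : Y' ⟶ Y, f' ≫ ψ = r ≫ f ∧ g' ≫ 𝟙 B = ψ ≫ g :=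
    complete_distinguished_triangle_morphism₂ _ _ hT' hT r (𝟙 B)
    (by change (h ≫ i⟦(1:ℤ)⟧') ≫ r⟦(1:ℤ)⟧' = 𝟙 B ≫ h
        simp only [assoc, ← CategoryTheory.Functor.map_comp, hir,
      CategoryTheory.Functor.map_id, comp_id, id_comp])
  have hcomm₁ : f ≫ (φ ≫ ψ) = 𝟙 A ≫ f := by
    rw [id_comp, ← assoc, hφ₁, assoc, hψ₁, ← assoc, hir, id_comp]
  have hψ₂' : ψ ≫ g = g' := by rw [← hψ₂, comp_id]
  have hφ₂' : φ ≫ g' = g := by rw [← hφ₂, comp_id]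
  have hcomm₂ : g ≫ 𝟙 B = (φ ≫ ψ) ≫ g := by rw [comp_id, assoc, hψ₂', hφ₂']
  have hμ : IsIso (φ ≫ ψ) :=
    isIso₂_of_isIso₁₃ (Triangle.homMk (Triangle.mk f g h) (Triangle.mk f g h)
      (𝟙 A) (φ ≫ ψ) (𝟙 B) hcomm₁ hcomm₂ (by change h ≫ (𝟙 A)⟦(1:ℤ)⟧' = 𝟙 B ≫ h; simp)) hT hT
      (by change IsIso (𝟙 A); infer_instance) (by change IsIso (𝟙 B); infer_instance)
  obtain ⟨m, hm⟩ := hA' _ _ _ _ _ hT' hB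
  refine ⟨m, level_retract φ (ψ ≫ inv (φ ≫ ψ)) ?_ hm⟩
  rw [← assoc, IsIso.hom_inv_id]

/-! ### The split octahedron trick -/

lemma split_trick {P₀ A₁ A₂ Y₀ Y₁ Z : C}
    (u₀ : P₀ ⟶ A₁ ⊞ A₂) (f₀ : A₁ ⊞ A₂ ⟶ Y₀) (k₀ : Y₀ ⟶ P₀⟦(1:ℤ)⟧)
    (j₁ : A₁ ⟶ Y₁) (k₁ : Y₁ ⟶ P₀⟦(1:ℤ)⟧)
    (q : Y₀ ⟶ Z) (δ : Z ⟶ A₂⟦(1:ℤ)⟧)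
    (hT₀ : Triangle.mk u₀ f₀ k₀ ∈ distTriang C)
    (hT₁ : Triangle.mk (u₀ ≫ biprod.fst) j₁ k₁ ∈ distTriang C)
    (hTm : Triangle.mk (biprod.inr ≫ f₀) q δ ∈ distTriang C) :
    (∃ (ι : Z ⟶ Y₁ ⊞ (A₂⟦(1:ℤ)⟧)) (ρ : Y₁ ⊞ (A₂⟦(1:ℤ)⟧) ⟶ Z), ι ≫ ρ = 𝟙 Z) ∧
    (∃ (ι : Y₁ ⟶ Z ⊞ (P₀⟦(1:ℤ)⟧)) (ρ : Z ⊞ (P₀⟦(1:ℤ)⟧) ⟶ Y₁), ι ≫ ρ = 𝟙 Y₁) := by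
  have hz₀ : u₀ ≫ f₀ = 0 := comp_distTriang_mor_zero₁₂ _ hT₀
  have hzm : (biprod.inr ≫ f₀) ≫ q = 0 := comp_distTriang_mor_zero₁₂ _ hTm
  have hz₁ : j₁ ≫ k₁ = 0 := comp_distTriang_mor_zero₂₃ _ hT₁
  have hfstinl : (biprod.fst : A₁ ⊞ A₂ ⟶ A₁) ≫ biprod.inl =
      𝟙 (A₁ ⊞ A₂) - biprod.snd ≫ biprod.inr := by
    rw [← biprod.total]; abel
  -- the comparison map φ : Y₀ ⟶ Y₁
  obtain ⟨φ, hφ₁, hφ₂'⟩ : ∃ φ : Y₀ ⟶ Y₁, f₀ ≫ φ = biprod.fst ≫ j₁ ∧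
      k₀ ≫ (𝟙 P₀)⟦(1:ℤ)⟧' = φ ≫ k₁ := complete_distinguished_triangle_morphism
    (Triangle.mk u₀ f₀ k₀) (Triangle.mk (u₀ ≫ biprod.fst) j₁ k₁) hT₀ hT₁
    (𝟙 P₀) biprod.fst (by exact (id_comp _).symm)
  have hφ₂ : φ ≫ k₁ = k₀ := by
    rw [← hφ₂', CategoryTheory.Functor.map_id, comp_id]
  -- θ : Z ⟶ Y₁ with φ = q ≫ θ
  obtain ⟨θ, hθ⟩ : ∃ θ : Z ⟶ Y₁, φ = q ≫ θ := Triangle.yoneda_exact₂ _ hTm φ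
    (by change (biprod.inr ≫ f₀) ≫ φ = 0; rw [assoc, hφ₁, ← assoc, biprod.inr_fst, zero_comp])
  -- ξ := inl ≫ f₀ ≫ q  and  η : Y₁ ⟶ Z with ξ = j₁ ≫ η
  have hξ : (u₀ ≫ biprod.fst) ≫ (biprod.inl ≫ f₀ ≫ q) = 0 := by
    calc (u₀ ≫ biprod.fst) ≫ (biprod.inl ≫ f₀ ≫ q)
        = u₀ ≫ (biprod.fst ≫ biprod.inl) ≫ (f₀ ≫ q) := by simp only [assoc]
      _ = u₀ ≫ (𝟙 (A₁ ⊞ A₂) - biprod.snd ≫ biprod.inr) ≫ (f₀ ≫ q) := by rw [hfstinl]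
      _ = (u₀ ≫ f₀) ≫ q - (u₀ ≫ biprod.snd) ≫ ((biprod.inr ≫ f₀) ≫ q) := by
            simp only [Preadditive.comp_sub, Preadditive.sub_comp, id_comp, assoc]
      _ = 0 := by rw [hz₀, hzm, zero_comp, comp_zero, sub_zero]
  obtain ⟨η, hη⟩ : ∃ η : Y₁ ⟶ Z, biprod.inl ≫ f₀ ≫ q = j₁ ≫ η :=
    Triangle.yoneda_exact₂ _ hT₁ (biprod.inl ≫ f₀ ≫ q) hξ
  -- π : P₀⟦1⟧ ⟶ Z with φ ≫ η - q = k₀ ≫ π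
  have hfφη : f₀ ≫ (φ ≫ η) = f₀ ≫ q := by
    calc f₀ ≫ (φ ≫ η) = (f₀ ≫ φ) ≫ η := by rw [assoc]
      _ = biprod.fst ≫ (j₁ ≫ η) := by rw [hφ₁, assoc]
      _ = (biprod.fst ≫ biprod.inl) ≫ (f₀ ≫ q) := by rw [← hη]; simp only [assoc]
      _ = (𝟙 (A₁ ⊞ A₂) - biprod.snd ≫ biprod.inr) ≫ (f₀ ≫ q) := by rw [hfstinl]
      _ = f₀ ≫ q - biprod.snd ≫ ((biprod.inr ≫ f₀) ≫ q) := by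
            simp only [Preadditive.sub_comp, id_comp, assoc]
      _ = f₀ ≫ q := by rw [hzm, comp_zero, sub_zero]
  obtain ⟨π, hπ⟩ : ∃ π : P₀⟦(1:ℤ)⟧ ⟶ Z, φ ≫ η - q = k₀ ≫ π :=
    Triangle.yoneda_exact₃ _ hT₀ (φ ≫ η - q)
    (by change f₀ ≫ (φ ≫ η - q) = 0
        rw [Preadditive.comp_sub, hfφη, sub_self])
  set η' : Y₁ ⟶ Z := η - k₁ ≫ π with hη'def
  have hqθη' : q ≫ (θ ≫ η') = q := by
    have h1 : q ≫ (θ ≫ η') = φ ≫ η' := by rw [← assoc, ← hθ]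
    rw [h1, hη'def, Preadditive.comp_sub, ← assoc, hφ₂, ← hπ]
    abel
  -- ψ : A₂⟦1⟧ ⟶ Z with 𝟙 Z - θ ≫ η' = δ ≫ ψ
  obtain ⟨ψ, hψ⟩ : ∃ ψ : A₂⟦(1:ℤ)⟧ ⟶ Z, 𝟙 Z - θ ≫ η' = δ ≫ ψ :=
    Triangle.yoneda_exact₃ _ hTm (𝟙 Z - θ ≫ η')
    (by change q ≫ (𝟙 Z - θ ≫ η') = 0
        rw [Preadditive.comp_sub, comp_id, hqθη', sub_self])
  constructor
  · refine ⟨biprod.lift θ δ, biprod.desc η' ψ, ?_⟩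
    rw [biprod.lift_desc, ← hψ]
    abel
  · -- τ : P₀⟦1⟧ ⟶ Y₁ with η' ≫ θ - 𝟙 = k₁ ≫ τ
    have hjη'θ : j₁ ≫ (η' ≫ θ) = j₁ := by
      have h2 : j₁ ≫ η' = j₁ ≫ η := by
        rw [hη'def, Preadditive.comp_sub, ← assoc, hz₁, zero_comp, sub_zero]
      calc j₁ ≫ (η' ≫ θ) = (j₁ ≫ η') ≫ θ := by rw [assoc]
        _ = (j₁ ≫ η) ≫ θ := by rw [h2]
        _ = (biprod.inl ≫ f₀ ≫ q) ≫ θ := by rw [← hη]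
        _ = biprod.inl ≫ f₀ ≫ (q ≫ θ) := by simp only [assoc]
        _ = biprod.inl ≫ f₀ ≫ φ := by rw [← hθ]
        _ = biprod.inl ≫ biprod.fst ≫ j₁ := by rw [hφ₁]
        _ = j₁ := by rw [← assoc, biprod.inl_fst, id_comp]
    obtain ⟨τ, hτ⟩ : ∃ τ : P₀⟦(1:ℤ)⟧ ⟶ Y₁, η' ≫ θ - 𝟙 Y₁ = k₁ ≫ τ :=
      Triangle.yoneda_exact₃ _ hT₁ (η' ≫ θ - 𝟙 Y₁)
      (by change j₁ ≫ (η' ≫ θ - 𝟙 Y₁) = 0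
          rw [Preadditive.comp_sub, comp_id, hjη'θ, sub_self])
    refine ⟨biprod.lift η' k₁, biprod.desc θ (-τ), ?_⟩
    rw [biprod.lift_desc, Preadditive.comp_neg, ← sub_eq_add_neg, ← hτ]
    abel

/-! ### Shearing constructions -/

lemma aux_shear {P N₁ N₂ Y : C} (u : P ⟶ N₂) (fY : N₂ ⟶ Y) (k : Y ⟶ P⟦(1:ℤ)⟧) (a : N₁ ⟶ N₂)
    (hT : Triangle.mk u fY k ∈ distTriang C) :
    ∃ (ub : P ⊞ N₁ ⟶ N₂ ⊞ N₁) (gb : N₂ ⊞ N₁ ⟶ Y) (kb : Y ⟶ (P ⊞ N₁)⟦(1:ℤ)⟧),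
      Triangle.mk ub gb kb ∈ (distTriang C) ∧ ub ≫ biprod.fst = biprod.desc u (-a) := by
  obtain ⟨ks, hsum⟩ : ∃ ks : Y ⊞ (0:C) ⟶ (P ⊞ N₁)⟦(1:ℤ)⟧, Triangle.mk (biprod.map u (𝟙 N₁))
      (biprod.map fY (0 : N₁ ⟶ (0:C))) ks ∈ distTriang C :=
    sum_distinguished (Triangle.mk u fY k) (contractibleTriangle N₁)
    hT (contractible_distinguished N₁)
  set Γh : N₂ ⊞ N₁ ⟶ N₂ ⊞ N₁ := biprod.desc biprod.inl (biprod.lift a (𝟙 N₁)) with hΓh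
  set Γi : N₂ ⊞ N₁ ⟶ N₂ ⊞ N₁ := biprod.desc biprod.inl (biprod.lift (-a) (𝟙 N₁)) with hΓi
  have hΓ1 : Γh ≫ Γi = 𝟙 _ := by
    apply biprod.hom_ext' <;> apply biprod.hom_ext <;>
      simp [hΓh, hΓi, biprod.lift_desc]
  have hΓ2 : Γi ≫ Γh = 𝟙 _ := by
    apply biprod.hom_ext' <;> apply biprod.hom_ext <;>
      simp [hΓh, hΓi, biprod.lift_desc]
  have hfl : (biprod.fst ≫ biprod.lift (𝟙 Y) (0 : Y ⟶ (0:C))) = 𝟙 (Y ⊞ (0:C)) := by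
    apply biprod.hom_ext
    · simp
    · exact (isZero_zero C).eq_of_tgt _ _
  refine ⟨biprod.map u (𝟙 N₁) ≫ Γi, Γh ≫ biprod.map fY (0 : N₁ ⟶ (0:C)) ≫ biprod.fst,
    biprod.lift (𝟙 Y) 0 ≫ ks, ?_, ?_⟩
  · refine isomorphic_distinguished _ hsum _ ?_
    refine Triangle.isoMk _ _ (Iso.refl _) ⟨Γh, Γi, hΓ1, hΓ2⟩
      (biprodIsoOfIsZero Y (0:C) (isZero_zero C)).symm ?_ ?_ ?_
    · change (biprod.map u (𝟙 N₁) ≫ Γi) ≫ Γh = 𝟙 (P ⊞ N₁) ≫ biprod.map u (𝟙 N₁)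
      rw [assoc, hΓ2, comp_id, id_comp]
    · show (Γh ≫ biprod.map fY (0 : N₁ ⟶ (0:C)) ≫ biprod.fst) ≫ biprod.lift (𝟙 Y) 0 =
        Γh ≫ biprod.map fY (0 : N₁ ⟶ (0:C))
      rw [assoc, assoc, hfl, comp_id]
    · show (biprod.lift (𝟙 Y) 0 ≫ ks) ≫ (𝟙 (P ⊞ N₁))⟦(1:ℤ)⟧' = biprod.lift (𝟙 Y) 0 ≫ ks
      rw [CategoryTheory.Functor.map_id, comp_id]
  · apply biprod.hom_ext' <;> simp [hΓi]

lemma aux_shear₂ {N₁ N₂ N₃ P : C} (a : N₁ ⟶ N₂) (b : N₂ ⟶ N₃) (c₀ : N₃ ⟶ N₁⟦(1:ℤ)⟧)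
    (u : P ⟶ N₂) (hN : Triangle.mk a b c₀ ∈ distTriang C) :
    ∃ (f₀ : N₂ ⊞ P ⟶ N₃) (k₀ : N₃ ⟶ (P ⊞ N₁)⟦(1:ℤ)⟧),
      Triangle.mk (biprod.lift (biprod.desc u (-a)) biprod.fst) f₀ k₀ ∈ distTriang C := by
  have hNeg : Triangle.mk (-a) b (-c₀) ∈ distTriang C := by
    refine isomorphic_distinguished _ hN _ ?_
    refine Triangle.isoMk _ _ (⟨-𝟙 N₁, -𝟙 N₁, by simp, by simp⟩ : N₁ ≅ N₁) (Iso.refl _)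
      (Iso.refl _) (by change (-a) ≫ 𝟙 N₂ = (-𝟙 N₁) ≫ a; simp)
      (by exact (comp_id b).trans (id_comp b).symm) ?_
    dsimp
    change (-c₀) ≫ (-𝟙 N₁)⟦(1:ℤ)⟧' = 𝟙 N₃ ≫ c₀
    rw [CategoryTheory.Functor.map_neg, CategoryTheory.Functor.map_id]
    simp
  obtain ⟨ks, hsum⟩ : ∃ ks : N₃ ⊞ (0:C) ⟶ (N₁ ⊞ P)⟦(1:ℤ)⟧, Triangle.mk (biprod.map (-a) (𝟙 P))
      (biprod.map b (0 : P ⟶ (0:C))) ks ∈ distTriang C :=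
    sum_distinguished (Triangle.mk (-a) b (-c₀)) (contractibleTriangle P)
    hNeg (contractible_distinguished P)
  set Δh : N₂ ⊞ P ⟶ N₂ ⊞ P := biprod.desc biprod.inl (biprod.lift (-u) (𝟙 P)) with hΔh
  set Δi : N₂ ⊞ P ⟶ N₂ ⊞ P := biprod.desc biprod.inl (biprod.lift u (𝟙 P)) with hΔi
  have hΔ1 : Δh ≫ Δi = 𝟙 _ := by
    apply biprod.hom_ext' <;> apply biprod.hom_ext <;>
      simp [hΔh, hΔi, biprod.lift_desc]
  have hΔ2 : Δi ≫ Δh = 𝟙 _ := by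
    apply biprod.hom_ext' <;> apply biprod.hom_ext <;>
      simp [hΔh, hΔi, biprod.lift_desc]
  have hfl : (biprod.fst ≫ biprod.lift (𝟙 N₃) (0 : N₃ ⟶ (0:C))) = 𝟙 (N₃ ⊞ (0:C)) := by
    apply biprod.hom_ext
    · simp
    · exact (isZero_zero C).eq_of_tgt _ _
  refine ⟨Δh ≫ biprod.map b (0 : P ⟶ (0:C)) ≫ biprod.fst,
    biprod.lift (𝟙 N₃) 0 ≫ ks ≫ ((biprod.braiding P N₁).inv)⟦(1:ℤ)⟧', ?_⟩
  refine isomorphic_distinguished _ hsum _ ?_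
  refine Triangle.isoMk _ _ (biprod.braiding P N₁) ⟨Δh, Δi, hΔ1, hΔ2⟩
    (biprodIsoOfIsZero N₃ (0:C) (isZero_zero C)).symm ?_ ?_ ?_
  · change biprod.lift (biprod.desc u (-a)) biprod.fst ≫ Δh =
      (biprod.braiding P N₁).hom ≫ biprod.map (-a) (𝟙 P)
    apply biprod.hom_ext' <;> apply biprod.hom_ext <;>
      simp [hΔh, biprod.braiding, biprod.lift_desc]
  · show (Δh ≫ biprod.map b (0 : P ⟶ (0:C)) ≫ biprod.fst) ≫ biprod.lift (𝟙 N₃) 0 =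
      Δh ≫ biprod.map b (0 : P ⟶ (0:C))
    rw [assoc, assoc, hfl, comp_id]
  · show (biprod.lift (𝟙 N₃) 0 ≫ ks ≫ ((biprod.braiding P N₁).inv)⟦(1:ℤ)⟧') ≫
        ((biprod.braiding P N₁).hom)⟦(1:ℤ)⟧' = biprod.lift (𝟙 N₃) 0 ≫ ks
    simp only [assoc, ← CategoryTheory.Functor.map_comp, Iso.inv_hom_id,
      CategoryTheory.Functor.map_id, comp_id]

/-! ### Closure of `Good` under extensions -/

lemma good_ext {S : Set C} {N₁ N₂ N₃ : C} {a : N₁ ⟶ N₂} {b : N₂ ⟶ N₃} {c₀ : N₃ ⟶ N₁⟦(1:ℤ)⟧}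
    (hN : Triangle.mk a b c₀ ∈ distTriang C) (h₁ : Good S N₁) (h₃ : Good S N₃) :
    Good S N₂ := by
  intro Y B f g h hT hB
  obtain ⟨bN, hBlev⟩ := hB
  have hN₁ : ∃ m, N₁ ∈ level S m :=
    h₁ N₁ 0 (𝟙 N₁) 0 0 (contractible_distinguished N₁) ⟨0, level_zero (isZero_zero C)⟩
  set P : C := B⟦(-1:ℤ)⟧ with hPdef
  have hPlev : P ∈ level S bN := level_shift _ hBlev
  -- the inverse rotation of the given triangle
  have hTinv : Triangle.mk ((Triangle.mk f g h).invRotate).mor₁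
      ((Triangle.mk f g h).invRotate).mor₂ ((Triangle.mk f g h).invRotate).mor₃
      ∈ distTriang C := inv_rot_of_distTriang _ hT
  obtain ⟨ub, gb, kb, hTb, hfstb⟩ := aux_shear ((Triangle.mk f g h).invRotate).mor₁
    ((Triangle.mk f g h).invRotate).mor₂ ((Triangle.mk f g h).invRotate).mor₃ a hTinv
  -- complete the map ℓ = ub ≫ fst to a triangle with cone D
  obtain ⟨D, j₁, k₁, hT₁⟩ := distinguished_cocone_triangle (ub ≫ biprod.fst)
  -- complete inr ≫ gb to a triangle with cone Z
  obtain ⟨Z, q, δ, hTm⟩ := distinguished_cocone_triangle (biprod.inr ≫ gb)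
  obtain ⟨⟨ι₁, ρ₁, hιρ₁⟩, _⟩ := split_trick ub gb kb j₁ k₁ q δ hTb hT₁ hTm
  -- second application : identify D up to retract
  obtain ⟨f₀, k₀, hT₀'⟩ := aux_shear₂ a b c₀ ((Triangle.mk f g h).invRotate).mor₁ hN
  have hT₁' : Triangle.mk ((biprod.lift (biprod.desc ((Triangle.mk f g h).invRotate).mor₁ (-a))
      biprod.fst) ≫ biprod.fst) j₁ k₁ ∈ distTriang C := by
    exact (congrArg (fun x => Triangle.mk x j₁ k₁ ∈ distTriang C)
      ((biprod.lift_fst _ _).trans hfstb.symm)).mpr hT₁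
  obtain ⟨Z', q', δ', hTm'⟩ := distinguished_cocone_triangle (biprod.inr ≫ f₀)
  obtain ⟨_, ⟨ι₂, ρ₂, hιρ₂⟩⟩ := split_trick _ f₀ k₀ j₁ k₁ q' δ' hT₀' hT₁' hTm'
  -- memberships
  obtain ⟨m₁, hm₁⟩ := hN₁
  -- Z' ∈ levels via Good N₃
  have hZ' : ∃ m, Z' ∈ level S m := by
    have hrot := rot_of_distTriang _ hTm'
    refine h₃ Z' (P⟦(1:ℤ)⟧) q' δ' (-(biprod.inr ≫ f₀)⟦(1:ℤ)⟧') hrot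
      ⟨bN, level_shift _ hPlev⟩
  obtain ⟨m₂, hm₂⟩ := hZ'
  -- D ∈ levels via retract of Z' ⊞ (P ⊞ N₁)⟦1⟧
  have hD : ∃ m, D ∈ level S m := by
    set m₃ := max m₂ (max bN m₁) with hm₃
    refine ⟨m₃, level_retract ι₂ ρ₂ hιρ₂ (level_biprod ?_ ?_)⟩
    · exact level_mono S (le_max_left _ _) hm₂
    · refine level_shift _ (level_biprod ?_ ?_)
      · exact level_mono S (le_trans (le_max_left _ _) (le_max_right _ _)) hPlev
      · exact level_mono S (le_trans (le_max_right _ _) (le_max_right _ _)) hm₁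
  obtain ⟨m₄, hm₄⟩ := hD
  -- Z ∈ levels via retract of D ⊞ N₁⟦1⟧
  have hZ : ∃ m, Z ∈ level S m := by
    set m₅ := max m₄ m₁ with hm₅
    refine ⟨m₅, level_retract ι₁ ρ₁ hιρ₁ (level_biprod ?_ ?_)⟩
    · exact level_mono S (le_max_left _ _) hm₄
    · exact level_shift _ (level_mono S (le_max_right _ _) hm₁)
  -- conclude via Good N₁ applied to the triangle (N₁, Y, Z)
  exact h₁ Y Z (biprod.inr ≫ gb) q δ hTm hZ

/-! ### All levels consist of good objects -/

lemma good_level (S : Set C) : ∀ (n : ℕ) {A : C}, A ∈ level S n → Good S A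
  | 0, A, hA => Good.of_add (addClosure_mono (Set.empty_subset S) hA)
  | 1, A, hA => Good.of_add hA
  | (n+2), A, hA => by
    have IH : ∀ {X : C}, X ∈ level S (n+1) → Good S X := fun hX => good_level S (n+1) hX
    have hA' : addClosure (coneSet (level S (n+1)) (addClosure S)) A := hA
    clear hA
    induction hA' with
    | of h =>
      obtain ⟨X, Y', f, g, hh, hd, hX, hY⟩ := h
      exact good_ext (rot_of_distTriang _ hd) (Good.of_add hY) ((IH hX).shift 1)
    | zero h => exact Good.of_add (.zero h)
    | iso e _ ih => exact ih.iso e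
    | shift m _ ih => exact ih.shift m
    | biprod _ _ ihX ihY =>
      exact good_ext (binaryBiproductTriangle_distinguished _ _) ihX ihY
    | retract i r hir _ ih => exact ih.retract i r hir

/-! ### The thick-subcategory side -/

lemma addClosure_subset_thick {T G : Set C} (hT : IsThick T) (hG : G ⊆ T) {X : C}
    (hX : addClosure G X) : X ∈ T := by
  induction hX with
  | of h' => exact hG h'
  | zero h' => exact hT.zero _ h'
  | iso e _ ih => exact hT.iso e ih
  | shift n _ ih => exact hT.shift _ n ih
  | biprod hX hY ihX ihY =>
    exact hT.ext₂ _ (binaryBiproductTriangle_distinguished _ _) ihX ihY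
  | retract i r hir _ ih => exact hT.retract i r hir ih

lemma level_subset_thick {S T : Set C} (hT : IsThick T) (hST : S ⊆ T) :
    ∀ n : ℕ, level S n ⊆ T
  | 0 => fun X hX => addClosure_subset_thick hT (Set.empty_subset T) hX
  | 1 => fun X hX => addClosure_subset_thick hT hST hX
  | (n+2) => fun X hX => by
    refine addClosure_subset_thick hT ?_ hX
    rintro E ⟨X', Y', f, g, hh, hd, hX', hY'⟩
    refine hT.ext₂ _ (rot_of_distTriang _ hd) ?_ ?_
    · exact addClosure_subset_thick hT hST hY'
    · exact hT.shift _ 1 (level_subset_thick hT hST (n+1) hX')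

end PaperProof

open Paper in
theorem statement0 {C : Type u} [Category.{v} C] [Preadditive C] [HasZeroObject C]
    [HasShift C ℤ] [∀ n : ℤ, (shiftFunctor C n).Additive] [Pretriangulated C]
    [HasBinaryBiproducts C] (S : Set C) :
    (∀ n : ℕ, level S n ⊆ level S (n+1)) ∧ (⋃ n : ℕ, level S n) = thickClosure S := by
  constructor
  · exact PaperProof.level_mono_succ S
  · apply subset_antisymm
    · rintro X hX T hT hST
      obtain ⟨n, hn⟩ := Set.mem_iUnion.1 hX
      exact PaperProof.level_subset_thick hT hST n hn
    · intro X hX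
      have hU : IsThick (⋃ n : ℕ, level S n) := by
        constructor
        · intro Z hZ
          exact Set.mem_iUnion.2 ⟨0, PaperProof.level_zero hZ⟩
        · intro Z Z' e hZ
          obtain ⟨n, hn⟩ := Set.mem_iUnion.1 hZ
          exact Set.mem_iUnion.2 ⟨n, PaperProof.level_iso e hn⟩
        · intro Z n hZ
          obtain ⟨m, hm⟩ := Set.mem_iUnion.1 hZ
          exact Set.mem_iUnion.2 ⟨m, PaperProof.level_shift n hm⟩
        · intro T' hT' h₁ h₃
          obtain ⟨n₁, hn₁⟩ := Set.mem_iUnion.1 h₁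
          obtain ⟨n₃, hn₃⟩ := Set.mem_iUnion.1 h₃
          obtain ⟨m, hm⟩ := PaperProof.good_level S n₁ hn₁ T'.obj₂ T'.obj₃
            T'.mor₁ T'.mor₂ T'.mor₃ hT' ⟨n₃, hn₃⟩
          exact Set.mem_iUnion.2 ⟨m, hm⟩
        · intro Z Z' i r hir hZ'
          obtain ⟨n, hn⟩ := Set.mem_iUnion.1 hZ'
          exact Set.mem_iUnion.2 ⟨n, PaperProof.level_retract i r hir hn⟩
      exact hX _ hU (fun Y hY => Set.mem_iUnion.2 ⟨1, Paper.addClosure.of hY⟩)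
end

section
/- Let X be a quasi-compact quasi-separated scheme (or algebraic stack) and E a vector bundle with pd(E) ≤ r. Then pd(E^∨) ≤ r, where E^∨ is the dual bundle. -/
open CategoryTheory CategoryTheory.Abelian CategoryTheory.MonoidalCategory

universe w v u

namespace Paper

variable {C : Type u} [Category.{v} C] [Abelian C] [HasExt.{w} C]

/-- `pdLE E r` : the projective dimension of `E`, measured by vanishing of `Ext`-groups
against all (quasi-coherent) objects, is at most `r` :
`Ext^d(E, M) = 0` for all `M` and all `d > r`. -/
def pdLE (E : C) (r : ℕ) : Prop :=
  ∀ (M : C) (d : ℕ), r < d → Subsingleton (Abelian.Ext E M d)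

end Paper

namespace Paper4Aux

open CategoryTheory CategoryTheory.Abelian CategoryTheory.Limits
  CategoryTheory.MonoidalCategory Paper

section Retract

variable {C : Type u} [Category.{v} C] [Abelian C] [HasExt.{w} C]

/-- `pdLE` descends along retracts. -/
lemma pdLE_of_retract {A B : C} (i : B ⟶ A) (p : A ⟶ B) (hip : i ≫ p = 𝟙 B)
    {r : ℕ} (hA : pdLE A r) : pdLE B r := by
  intro M d hd
  haveI := hA M d hd
  refine ⟨fun x y => ?_⟩
  have key : ∀ z : Ext B M d,
      z = (Ext.mk₀ i).comp ((Ext.mk₀ p).comp z (zero_add d)) (zero_add d) := by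
    intro z
    rw [Ext.mk₀_comp_mk₀_assoc, hip, Ext.mk₀_id_comp]
  rw [key x, key y]
  congr 1
  exact Subsingleton.elim _ _

end Retract

/-- An adjunction between additive functors induces an adjunction between the
induced functors on homological complexes. -/
noncomputable def adjMapHomologicalComplex {C₁ : Type*} {C₂ : Type*} [Category C₁] [Category C₂]
    [Preadditive C₁] [Preadditive C₂]
    {F : C₁ ⥤ C₂} {G : C₂ ⥤ C₁} (adj : F ⊣ G) [F.Additive] [G.Additive]
    {ι : Type*} (c : ComplexShape ι) :
    F.mapHomologicalComplex c ⊣ G.mapHomologicalComplex c :=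
  Adjunction.mkOfUnitCounit
    { unit :=
        { app := fun K =>
            { f := fun i => adj.unit.app (K.X i)
              comm' := fun i j _ => by exact (adj.unit.naturality (K.d i j)).symm }
          naturality := fun K L φ => by
            ext i
            exact adj.unit.naturality (φ.f i) }
      counit :=
        { app := fun K =>
            { f := fun i => adj.counit.app (K.X i)
              comm' := fun i j _ => by exact (adj.counit.naturality (K.d i j)).symm }
          naturality := fun K L φ => by
            ext i
            exact adj.counit.naturality (φ.f i) }
      left_triangle := by
        ext K i
        simp
        exact adj.left_triangle_components (K.X i)
      right_triangle := by
        ext K i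
        simp
        exact adj.right_triangle_components (K.X i) }

section Tensor

variable {C : Type u} [Category.{v} C] [Abelian C] [HasExt.{w} C]
  [MonoidalCategory C]

/-- If `pd X ≤ r` and `Y` is dualizable (on both sides), then `pd (X ⊗ Y) ≤ r`. -/
lemma pdLE_tensorRight (X Y Y' : C) [ExactPairing Y Y'] [ExactPairing Y' Y]
    {r : ℕ} (hX : pdLE X r) : pdLE (X ⊗ Y) r := by
  letI := HasDerivedCategory.standard C
  set F : C ⥤ C := tensorRight Y with hF
  set G : C ⥤ C := tensorRight Y' with hG
  let adj : F ⊣ G := tensorRightAdjunction Y Y'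
  let adj' : G ⊣ F := tensorRightAdjunction Y' Y
  haveI : F.IsLeftAdjoint := ⟨G, ⟨adj⟩⟩
  haveI : F.IsRightAdjoint := ⟨G, ⟨adj'⟩⟩
  haveI : G.IsLeftAdjoint := ⟨F, ⟨adj'⟩⟩
  haveI : G.IsRightAdjoint := ⟨F, ⟨adj⟩⟩
  haveI : PreservesFiniteLimits F := ⟨fun _ _ _ => inferInstance⟩
  haveI : PreservesFiniteColimits F := ⟨fun _ _ _ => inferInstance⟩
  haveI : PreservesFiniteLimits G := ⟨fun _ _ _ => inferInstance⟩
  haveI : PreservesFiniteColimits G := ⟨fun _ _ _ => inferInstance⟩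
  haveI : F.Additive := Functor.additive_of_preserves_binary_products F
  haveI : G.Additive := Functor.additive_of_preserves_binary_products G
  -- the adjunction on cochain complexes
  let adjC : F.mapHomologicalComplex (ComplexShape.up ℤ) ⊣
      G.mapHomologicalComplex (ComplexShape.up ℤ) :=
    adjMapHomologicalComplex adj _
  haveI : CatCommSq (F.mapHomologicalComplex (ComplexShape.up ℤ))
      DerivedCategory.Q DerivedCategory.Q F.mapDerivedCategory :=
    ⟨F.mapDerivedCategoryFactors.symm⟩
  haveI : CatCommSq (G.mapHomologicalComplex (ComplexShape.up ℤ))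
      DerivedCategory.Q DerivedCategory.Q G.mapDerivedCategory :=
    ⟨G.mapDerivedCategoryFactors.symm⟩
  -- the derived adjunction
  let adjD : F.mapDerivedCategory ⊣ G.mapDerivedCategory :=
    adjC.localization DerivedCategory.Q
      (HomologicalComplex.quasiIso C (ComplexShape.up ℤ))
      DerivedCategory.Q (HomologicalComplex.quasiIso C (ComplexShape.up ℤ))
      F.mapDerivedCategory G.mapDerivedCategory
  -- the single functor comparison
  let S := DerivedCategory.singleFunctor C 0
  let SC := CochainComplex.singleFunctor C 0
  let eS : S ≅ SC ⋙ DerivedCategory.Q :=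
    (SingleFunctors.evaluation _ _ 0).mapIso (DerivedCategory.singleFunctorsPostcompQIso C)
  let e1 : F.mapDerivedCategory.obj (S.obj X) ≅ S.obj (X ⊗ Y) :=
    F.mapDerivedCategory.mapIso (eS.app X) ≪≫
      F.mapDerivedCategoryFactors.app (SC.obj X) ≪≫
      DerivedCategory.Q.mapIso
        ((HomologicalComplex.singleMapHomologicalComplex F (ComplexShape.up ℤ) 0).app X) ≪≫
      (eS.app (X ⊗ Y)).symm
  intro M d hd
  haveI hsub : Subsingleton (Ext X (M ⊗ Y') d) := hX (M ⊗ Y') d hd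
  let e2 : G.mapDerivedCategory.obj (S.obj M) ≅ S.obj (M ⊗ Y') :=
    G.mapDerivedCategory.mapIso (eS.app M) ≪≫
      G.mapDerivedCategoryFactors.app (SC.obj M) ≪≫
      DerivedCategory.Q.mapIso
        ((HomologicalComplex.singleMapHomologicalComplex G (ComplexShape.up ℤ) 0).app M) ≪≫
      (eS.app (M ⊗ Y')).symm
  let u : G.mapDerivedCategory.obj ((S.obj M)⟦(d : ℤ)⟧) ≅ (S.obj (M ⊗ Y'))⟦(d : ℤ)⟧ :=
    (G.mapDerivedCategory.commShiftIso (d : ℤ)).app (S.obj M) ≪≫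
      (shiftFunctor (DerivedCategory C) (d : ℤ)).mapIso e2
  have etotal : Ext (X ⊗ Y) M d ≃ Ext X (M ⊗ Y') d :=
    Ext.homEquiv.trans ((e1.symm.homCongr (Iso.refl ((S.obj M)⟦(d : ℤ)⟧))).trans
      ((adjD.homEquiv (S.obj X) ((S.obj M)⟦(d : ℤ)⟧)).trans
        ((Iso.homCongr (Iso.refl (S.obj X)) u).trans Ext.homEquiv.symm)))
  exact Equiv.subsingleton etotal

end Tensor

end Paper4Aux

open Paper in
/-- If `E` is a vector bundle (dualizable object) with `pd(E) ≤ r`, then `pd(E^∨) ≤ r`. -/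
theorem statement4 {C : Type u} [Category.{v} C] [Abelian C] [HasExt.{w} C]
    [MonoidalCategory C] [SymmetricCategory C]
    (E : C) [HasRightDual E] (r : ℕ)
    (hE : pdLE E r) : pdLE (Eᘁ) r := by
  haveI : ExactPairing Eᘁ E := CategoryTheory.BraidedCategory.exactPairing_swap E (Eᘁ)
  have h1 : pdLE (E ⊗ Eᘁ) r := Paper4Aux.pdLE_tensorRight E (Eᘁ) E hE
  have h2 : pdLE ((E ⊗ Eᘁ) ⊗ Eᘁ) r := Paper4Aux.pdLE_tensorRight (E ⊗ Eᘁ) (Eᘁ) E h1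
  refine Paper4Aux.pdLE_of_retract
    ((ρ_ (Eᘁ)).inv ≫ ((Eᘁ) ◁ η_ E (Eᘁ)) ≫ (β_ (Eᘁ) (E ⊗ Eᘁ)).hom)
    ((β_ (Eᘁ) (E ⊗ Eᘁ)).inv ≫ (α_ (Eᘁ) E (Eᘁ)).inv ≫ (ε_ E (Eᘁ) ▷ (Eᘁ)) ≫ (λ_ (Eᘁ)).hom)
    ?_ h2
  simp only [Category.assoc, Iso.hom_inv_id_assoc]
  rw [ExactPairing.coevaluation_evaluation_assoc]
  simp
end

section
/- Let T be a triangulated category with coproducts, G ∈ T, and suppose D^b_coh ⊆ T is a full triangulated subcategory such that every object of D^b_coh admits, for each m, an m-isomorphism from an object of ⟨G⟩ (approximation). If Perf ⊆ ⟨G⟩ₙ, where Perf ⊆ D^b_coh is a full subcategory such that every E ∈ D^b_coh admits for every m an m-isomorphism P → E with P ∈ Perf, and D^b_coh is bounded, then ⟨G⟩ₙ = D^b_coh. Concretely: for a Noetherian algebraic stack X satisfying approximation by compact complexes and G ∈ D^b_coh(X), Perf(X) ⊆ ⟨G⟩ₙ if and only if ⟨G⟩ₙ = D^b_coh(X). 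-/
open CategoryTheory Limits Pretriangulated Opposite

universe w v u

namespace Paper

variable {C : Type u} [Category.{v} C] [Preadditive C] [HasZeroObject C]
  [HasShift C ℤ] [∀ n : ℤ, (shiftFunctor C n).Additive] [Pretriangulated C]
  [HasBinaryBiproducts C]

/-- `f` is an `m`-isomorphism (w.r.t. the t-structure `t`): in a distinguished triangle
`A ⟶ B ⟶ Q ⟶ A[1]` on `f`, the cone `Q` satisfies `τ^{≥ m} Q ≅ 0`, i.e. `Q ∈ D^{≤ m-1}`. -/
def IsMIso (t : Triangulated.TStructure C) (m : ℤ) {A B : C} (f : A ⟶ B) : Prop :=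
  ∃ (Q : C) (g : B ⟶ Q) (h : Q ⟶ A⟦(1:ℤ)⟧),
    Triangle.mk f g h ∈ (distTriang C) ∧ t.le (m-1) Q

/-- An object `G` is compact if `Hom(G, -)` (as a functor to abelian groups) preserves
small coproducts. -/
def IsCompactObj (G : C) : Prop :=
  ∀ (ι : Type v) (f : ι → C),
    Nonempty (PreservesColimit (Discrete.functor f) (preadditiveCoyoneda.obj (op G)))

variable [HasCountableCoproducts C]

/-- The map `1 - shift` on `∐ M` associated to a directed system. -/
noncomputable def oneMinusShift (M : ℕ → C) (f : ∀ n, M n ⟶ M (n+1)) : ∐ M ⟶ ∐ M :=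
  Sigma.desc fun n => Sigma.ι M n - (f n ≫ Sigma.ι M (n+1))

/-- `(L, σ)` is a homotopy colimit of the system `(M, f)`: there is a distinguished triangle
`∐ M → ∐ M → L → (∐ M)[1]` whose first map is `1 - shift` and second map is `σ`. -/
def IsHocolim (M : ℕ → C) (f : ∀ n, M n ⟶ M (n+1)) (L : C) (σ : ∐ M ⟶ L) : Prop :=
  ∃ δ : L ⟶ (∐ M)⟦(1:ℤ)⟧, Triangle.mk (oneMinusShift M f) σ δ ∈ (distTriang C)

end Paper

set_option linter.unusedSectionVars false

namespace S10

open Paper ZeroObject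

variable {C : Type u} [Category.{v} C] [Preadditive C] [HasZeroObject C]
  [HasShift C ℤ] [∀ n : ℤ, (shiftFunctor C n).Additive] [Pretriangulated C]
  [HasBinaryBiproducts C]

variable (t : Triangulated.TStructure C)

lemma tzero {X Y : C} (f : X ⟶ Y) {n₀ n₁ : ℤ} (h : n₀ < n₁)
    (hX : t.le n₀ X) (hY : t.ge n₁ Y) : f = 0 := by
  have hX' : t.le 0 (X⟦n₀⟧) := t.le_shift n₀ n₀ 0 (by omega) X hX
  have hY1 : t.ge (n₀ + 1) Y := t.ge_antitone (show n₀ + 1 ≤ n₁ by omega) Y hY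
  have hY' : t.ge 1 (Y⟦n₀⟧) := t.ge_shift (n₀ + 1) n₀ 1 (by omega) Y hY1
  have hz : (shiftFunctor C n₀).map f = 0 := t.zero' _ hX' hY'
  apply (shiftFunctor C n₀).map_injective
  rw [hz, Functor.map_zero]

/-- If a distinguished triangle has `mor₁ = 0` and no maps `obj₁⟦1⟧ ⟶ obj₃`,
then `mor₂` is an isomorphism. -/
lemma isIso_mor₂_of_zero (T : Triangle C) (hT : T ∈ distTriang C)
    (h1 : T.mor₁ = 0) (h2 : ∀ (u : (T.obj₁⟦(1:ℤ)⟧ : C) ⟶ T.obj₃), u = 0) :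
    IsIso T.mor₂ := by
  obtain ⟨s, hs⟩ := Triangle.yoneda_exact₂ T hT (𝟙 T.obj₂) (by rw [h1, zero_comp])
  obtain ⟨g, hg⟩ := Triangle.yoneda_exact₃ T hT (𝟙 T.obj₃ - s ≫ T.mor₂)
    (by rw [Preadditive.comp_sub, ← Category.assoc, ← hs]; simp)
  rw [h2 g, comp_zero] at hg
  have hsg : s ≫ T.mor₂ = 𝟙 T.obj₃ := by
    have := sub_eq_zero.1 hg
    exact this.symm
  exact ⟨s, hs.symm, hsg⟩


lemma ge_mono {X : C} {m n : ℤ} (h : m ≤ n) (hX : t.ge n X) : t.ge m X :=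
  t.ge_antitone h X hX

lemma le_mono {X : C} {m n : ℤ} (h : m ≤ n) (hX : t.le m X) : t.le n X :=
  t.le_monotone h X hX

/-- `t.ge n` is closed under extensions. -/
lemma ge_ext (T : Triangle C) (hT : T ∈ distTriang C) {n : ℤ}
    (h₁ : t.ge n T.obj₁) (h₃ : t.ge n T.obj₃) : t.ge n T.obj₂ := by
  obtain ⟨A, B, hA, hB, f, g, h', htr⟩ := t.exists_triangle T.obj₂ (n - 1) n (by omega)
  have hf : f = 0 := by
    obtain ⟨u, hu⟩ := Triangle.coyoneda_exact₂ T hT f (tzero t _ (by omega) hA h₃)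
    rw [hu, tzero t u (by omega) hA h₁, zero_comp]
  have : IsIso g := by
    refine isIso_mor₂_of_zero (Triangle.mk f g h') htr hf (fun u => ?_)
    exact tzero t u (show n - 2 < n by omega) (t.le_shift (n-1) 1 (n-2) (by omega) A hA) hB
  exact (t.ge n).prop_of_iso (asIso g).symm hB

lemma ge_of_isZero {X : C} (hX : IsZero X) (n : ℤ) : t.ge n X := by
  obtain ⟨A, B, hA, hB, f, g, h', htr⟩ := t.exists_triangle X (n - 1) n (by omega)
  have hf : f = 0 := hX.eq_of_tgt f 0
  have : IsIso g := by
    refine isIso_mor₂_of_zero (Triangle.mk f g h') htr hf (fun u => ?_)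
    exact tzero t u (show n - 2 < n by omega) (t.le_shift (n-1) 1 (n-2) (by omega) A hA) hB
  exact (t.ge n).prop_of_iso (asIso g).symm hB

/-- Transport bijectivity of post-composition along the shift. -/
lemma bij_shift {T A : C} (φ : T ⟶ A) (k : ℤ) (W : C)
    (h : Function.Bijective (fun (x : A ⟶ (W⟦(-k)⟧ : C)) => φ ≫ x)) :
    Function.Bijective
      (fun (v : (A⟦k⟧ : C) ⟶ W) => (shiftFunctor C k).map φ ≫ v) := by
  have adj := (shiftEquiv C k).toAdjunction
  have key : ∀ (v : (A⟦k⟧ : C) ⟶ W),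
      adj.homEquiv T W ((shiftFunctor C k).map φ ≫ v) = φ ≫ adj.homEquiv A W v :=
    fun v => adj.homEquiv_naturality_left φ v
  constructor
  · intro v₁ v₂ hv
    apply (adj.homEquiv A W).injective
    apply h.1
    show φ ≫ adj.homEquiv A W v₁ = φ ≫ adj.homEquiv A W v₂
    rw [← key, ← key]
    exact congrArg (adj.homEquiv T W) hv
  · intro q
    obtain ⟨x, hx⟩ := h.2 (adj.homEquiv T W q)
    refine ⟨(adj.homEquiv A W).symm x, ?_⟩
    apply (adj.homEquiv T W).injective
    show adj.homEquiv T W _ = adj.homEquiv T W q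
    exact (key _).trans ((congrArg (φ ≫ ·) ((adj.homEquiv A W).apply_symm_apply x)).trans hx)

variable {S : Set C}

/-- Decomposition invariant: `P` is a retract of some `T` which admits a
"co-truncation" `φ : T ⟶ A` with `A ∈ L`, `A` bounded below by `m - c`, and
post-composition with `φ` bijective on maps into objects that are `≥ m + c`. -/
def DecIso (t : Triangulated.TStructure C) (L : Set C) (c : ℤ) (P : C) : Prop :=
  ∀ m : ℤ, ∃ (T A : C) (i : P ⟶ T) (r : T ⟶ P) (φ : T ⟶ A),
    i ≫ r = 𝟙 P ∧ A ∈ L ∧ t.ge (m - c) A ∧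
    ∀ (W : C), t.ge (m + c) W → Function.Bijective (fun (v : A ⟶ W) => φ ≫ v)

lemma decIso_addClosure {𝒜 : Set C} {c : ℤ}
    (hgen : ∀ X ∈ 𝒜, DecIso t (addClosure 𝒜) c X) :
    ∀ {P : C}, addClosure 𝒜 P → DecIso t (addClosure 𝒜) c P := by
  intro P hP
  induction hP with
  | of h => exact hgen _ h
  | @zero X0 h =>
    intro m
    refine ⟨X0, X0, 𝟙 X0, 𝟙 X0, 𝟙 X0, by simp, addClosure.zero h, ge_of_isZero t h _, ?_⟩
    intro W _
    have he : (fun (v : X0 ⟶ W) => 𝟙 X0 ≫ v) = id := by funext v; simp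
    rw [he]; exact Function.bijective_id
  | iso e h ih =>
    intro m
    obtain ⟨T, A, i, r, φ, hir, hA, hge, hbij⟩ := ih m
    refine ⟨T, A, e.inv ≫ i, r ≫ e.hom, φ, ?_, hA, hge, hbij⟩
    rw [Category.assoc, ← Category.assoc i, hir, Category.id_comp, e.inv_hom_id]
  | shift k h ih =>
    intro m
    obtain ⟨T, A, i, r, φ, hir, hA, hge, hbij⟩ := ih (m + k)
    refine ⟨T⟦k⟧, A⟦k⟧, (shiftFunctor C k).map i, (shiftFunctor C k).map r,
      (shiftFunctor C k).map φ, by rw [← (shiftFunctor C k).map_comp, hir, (shiftFunctor C k).map_id],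
      addClosure.shift k hA, t.ge_shift (m + k - c) k (m - c) (by omega) A hge, ?_⟩
    intro W hW
    exact bij_shift φ k W (hbij (W⟦(-k)⟧) (t.ge_shift (m + c) (-k) (m + k + c) (by omega) W hW))
  | biprod hX hY ihX ihY =>
    intro m
    obtain ⟨T₁, A₁, i₁, r₁, φ₁, hir₁, hA₁, hge₁, hbij₁⟩ := ihX m
    obtain ⟨T₂, A₂, i₂, r₂, φ₂, hir₂, hA₂, hge₂, hbij₂⟩ := ihY m
    refine ⟨T₁ ⊞ T₂, A₁ ⊞ A₂, biprod.map i₁ i₂, biprod.map r₁ r₂, biprod.map φ₁ φ₂,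
      ?_, addClosure.biprod hA₁ hA₂,
      ge_ext t _ (binaryBiproductTriangle_distinguished A₁ A₂) hge₁ hge₂, ?_⟩
    · ext <;> simp [hir₁, hir₂]
    · intro W hW
      constructor
      · intro v₁ v₂ hv
        dsimp at hv
        apply biprod.hom_ext' <;> [apply (hbij₁ W hW).1; apply (hbij₂ W hW).1]
        · show φ₁ ≫ biprod.inl ≫ v₁ = φ₁ ≫ biprod.inl ≫ v₂
          rw [← biprod.inl_map_assoc, ← biprod.inl_map_assoc, hv]
        · show φ₂ ≫ biprod.inr ≫ v₁ = φ₂ ≫ biprod.inr ≫ v₂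
          rw [← biprod.inr_map_assoc, ← biprod.inr_map_assoc, hv]
      · intro q
        obtain ⟨v₁, hv₁⟩ := (hbij₁ W hW).2 (biprod.inl ≫ q)
        obtain ⟨v₂, hv₂⟩ := (hbij₂ W hW).2 (biprod.inr ≫ q)
        dsimp at hv₁ hv₂
        refine ⟨biprod.desc v₁ v₂, ?_⟩
        dsimp
        apply biprod.hom_ext'
        · rw [biprod.inl_map_assoc, biprod.inl_desc, hv₁]
        · rw [biprod.inr_map_assoc, biprod.inr_desc, hv₂]
  | retract i' r' hir' h ih =>
    intro m
    obtain ⟨T, A, i, r, φ, hir, hA, hge, hbij⟩ := ih m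
    refine ⟨T, A, i' ≫ i, r ≫ r', φ, ?_, hA, hge, hbij⟩
    rw [Category.assoc, ← Category.assoc i, hir, Category.id_comp, hir']

lemma bij_id (A : C) (W : C) : Function.Bijective (fun (v : A ⟶ W) => 𝟙 A ≫ v) := by
  have he : (fun (v : A ⟶ W) => 𝟙 A ≫ v) = id := by funext v; simp
  rw [he]; exact Function.bijective_id

lemma decIso_gen_singleton {G : C} {aG bG : ℤ} (haG : t.ge aG G) (hbG : t.le bG G) :
    ∀ X ∈ ({G} : Set C), DecIso t (addClosure ({G} : Set C)) (max (bG - aG) 0 + 1) X := by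
  intro X hX
  rw [Set.mem_singleton_iff] at hX
  subst hX
  intro m
  have hmax1 : bG - aG ≤ max (bG - aG) 0 := le_max_left _ _
  have hmax2 : (0:ℤ) ≤ max (bG - aG) 0 := le_max_right _ _
  by_cases hm : m - (max (bG - aG) 0 + 1) ≤ aG
  · exact ⟨X, X, 𝟙 X, 𝟙 X, 𝟙 X, by simp, addClosure.of rfl, ge_mono t hm haG,
      fun W _ => bij_id X W⟩
  · refine ⟨X, 0, 𝟙 X, 𝟙 X, 0, by simp, addClosure.zero (isZero_zero C),
      ge_of_isZero t (isZero_zero C) _, ?_⟩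
    intro W hW
    constructor
    · intro v₁ v₂ _
      exact (isZero_zero C).eq_of_src v₁ v₂
    · intro q
      refine ⟨0, ?_⟩
      show (0 : X ⟶ (0:C)) ≫ (0 : (0:C) ⟶ W) = q
      rw [comp_zero]
      exact (tzero t q (show bG < m + (max (bG - aG) 0 + 1) by omega) hbG hW).symm

lemma decIso_level {G : C} {aG bG : ℤ} (haG : t.ge aG G) (hbG : t.le bG G) (n : ℕ) :
    ∃ c : ℤ, 0 ≤ c ∧
      ∀ P ∈ level ({G} : Set C) n, DecIso t (level ({G} : Set C) n) c P := by
  induction n with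
  | zero =>
    refine ⟨1, by omega, ?_⟩
    intro P hP
    exact decIso_addClosure t (fun X hX => absurd hX (Set.notMem_empty X)) hP
  | succ k ih =>
    cases k with
    | zero =>
      refine ⟨max (bG - aG) 0 + 1, by have := le_max_right (bG - aG) (0:ℤ); omega, ?_⟩
      intro P hP
      exact decIso_addClosure t (decIso_gen_singleton t haG hbG) hP
    | succ k' =>
      obtain ⟨c', hc'0, hdec'⟩ := ih
      set c₁ : ℤ := max (bG - aG) 0 + 1 with hc₁def
      have hc₁0 : (0:ℤ) ≤ c₁ := by have := le_max_right (bG - aG) (0:ℤ); omega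
      have hdec₁ : ∀ (Y : C), addClosure ({G} : Set C) Y →
          DecIso t (addClosure ({G} : Set C)) c₁ Y :=
        fun Y hY => decIso_addClosure t (decIso_gen_singleton t haG hbG) hY
      refine ⟨2*c' + c₁ + 1, by omega, ?_⟩
      intro P hP
      refine decIso_addClosure t ?_ hP
      rintro E' ⟨X, Y, f, u, v, hT, hX, hY⟩ m
      obtain ⟨TX, AX, iX, rX, φX, hirX, hAXmem, hAXge, hbijX⟩ := hdec' X hX (m - c₁ - c')
      obtain ⟨TY, AY, iY, rY, φY, hirY, hAYmem, hAYge, hbijY⟩ := hdec₁ Y hY m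
      -- the comparison morphism and its cone
      obtain ⟨Cσ, uσ, vσ, hσ⟩ := distinguished_cocone_triangle (rX ≫ f ≫ iY)
      -- E' is a retract of Cσ
      obtain ⟨a₃, ha₁, ha₂⟩ : ∃ a₃ : E' ⟶ Cσ, u ≫ a₃ = iY ≫ uσ ∧
          v ≫ (shiftFunctor C (1:ℤ)).map iX = a₃ ≫ vσ := complete_distinguished_triangle_morphism
        (Triangle.mk f u v) _ hT hσ iX iY
        (by change f ≫ iY = iX ≫ rX ≫ f ≫ iY; rw [reassoc_of% hirX])
      obtain ⟨b₃, hb₁, hb₂⟩ : ∃ b₃ : Cσ ⟶ E', uσ ≫ b₃ = rY ≫ u ∧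
          vσ ≫ (shiftFunctor C (1:ℤ)).map rX = b₃ ≫ v := complete_distinguished_triangle_morphism
        _ (Triangle.mk f u v) hσ hT rX rY
        (by change (rX ≫ f ≫ iY) ≫ rY = rX ≫ f; rw [Category.assoc, Category.assoc, hirY, Category.comp_id])
      have hiso : IsIso (a₃ ≫ b₃) := by
        refine Pretriangulated.isIso₃_of_isIso₁₂
          { hom₁ := 𝟙 X, hom₂ := 𝟙 Y, hom₃ := a₃ ≫ b₃,
            comm₁ := by exact (Category.comp_id f).trans (Category.id_comp f).symm
            comm₂ := ?_
            comm₃ := ?_ } hT hT ?_ ?_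
        · show u ≫ a₃ ≫ b₃ = 𝟙 Y ≫ u
          rw [← Category.assoc, ha₁, Category.assoc, hb₁, ← Category.assoc, hirY,
            Category.id_comp]
        · show v ≫ (shiftFunctor C (1:ℤ)).map (𝟙 X) = (a₃ ≫ b₃) ≫ v
          rw [(shiftFunctor C (1:ℤ)).map_id, Category.comp_id, Category.assoc, ← hb₂,
            ← Category.assoc, ← ha₂, Category.assoc, ← (shiftFunctor C (1:ℤ)).map_comp,
            hirX, (shiftFunctor C (1:ℤ)).map_id, Category.comp_id]
        · exact IsIso.id X
        · exact IsIso.id Y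
      -- the map α : AX ⟶ AY
      have hAYge' : t.ge (m - c₁ - c' + c') AY := by
        have e : m - c₁ - c' + c' = m - c₁ := by omega
        rw [e]; exact hAYge
      obtain ⟨α, hα⟩ := (hbijX AY hAYge').2 ((rX ≫ f ≫ iY) ≫ φY)
      have hα' : φX ≫ α = (rX ≫ f ≫ iY) ≫ φY := hα
      obtain ⟨Z, uα, vα, hZtri⟩ := distinguished_cocone_triangle α
      have hZmem : addClosure (coneSet (level ({G} : Set C) (k'+1))
          (addClosure ({G} : Set C))) Z :=
        addClosure.of ⟨AX, AY, α, uα, vα, hZtri, hAXmem, hAYmem⟩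
      have hz31 : vα ≫ (shiftFunctor C (1:ℤ)).map α = 0 :=
        comp_distTriang_mor_zero₃₁ _ hZtri
      have hZge : t.ge (m - (2*c' + c₁ + 1)) Z := by
        have h1 : t.ge (m - (2*c' + c₁ + 1)) AY := ge_mono t (by omega) hAYge
        have h3 : t.ge (m - (2*c' + c₁ + 1)) ((AX)⟦(1:ℤ)⟧) := by
          have := t.ge_shift (m - c₁ - c' - c') 1 (m - c₁ - 2*c' - 1) (by omega) AX hAXge
          exact ge_mono t (by omega) this
        exact ge_ext t _ (rot_of_distTriang _ hZtri) h1 h3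
      obtain ⟨φ, hφ₁0, hφ₂0⟩ : ∃ φ : Cσ ⟶ Z, uσ ≫ φ = φY ≫ uα ∧
          vσ ≫ (shiftFunctor C (1:ℤ)).map φX = φ ≫ vα := Pretriangulated.complete_distinguished_triangle_morphism
        _ _ hσ hZtri φX φY (by exact hα'.symm)
      have hφ₁ : uσ ≫ φ = φY ≫ uα := hφ₁0
      have hφ₂ : vσ ≫ (shiftFunctor C (1:ℤ)).map φX = φ ≫ vα := hφ₂0
      have hz12 : (rX ≫ f ≫ iY) ≫ uσ = 0 := comp_distTriang_mor_zero₁₂ _ hσ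
      refine ⟨Cσ, Z, a₃, b₃ ≫ inv (a₃ ≫ b₃), φ, ?_, hZmem, hZge, ?_⟩
      · rw [← Category.assoc]; exact IsIso.hom_inv_id _
      intro W hW
      have hWY : t.ge (m + c₁) W := ge_mono t (by omega) hW
      have hWX : t.ge (m - c₁ - c' + c') W := ge_mono t (by omega) hW
      have hWshift : t.ge (m + (2*c' + c₁ + 1) + 1) ((W)⟦(-1:ℤ)⟧) :=
        t.ge_shift (m + (2*c' + c₁ + 1)) (-1) (m + (2*c' + c₁ + 1) + 1) (by omega) W hW
      have hbijX1 : Function.Bijective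
          (fun (v : ((AX)⟦(1:ℤ)⟧ : C) ⟶ W) => (shiftFunctor C (1:ℤ)).map φX ≫ v) :=
        bij_shift φX 1 W (hbijX ((W)⟦(-1:ℤ)⟧) (ge_mono t (by omega) hWshift))
      have hbijY1 : Function.Bijective
          (fun (v : ((AY)⟦(1:ℤ)⟧ : C) ⟶ W) => (shiftFunctor C (1:ℤ)).map φY ≫ v) :=
        bij_shift φY 1 W (hbijY ((W)⟦(-1:ℤ)⟧) (ge_mono t (by omega) hWshift))
      have hker : ∀ (w : Z ⟶ W), φ ≫ w = 0 → w = 0 := by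
        intro w hw
        have h1 : φY ≫ (uα ≫ w) = φY ≫ 0 := by
          rw [comp_zero, ← Category.assoc, ← hφ₁, Category.assoc, hw, comp_zero]
        have h2 : uα ≫ w = 0 := (hbijY W hWY).1 h1
        obtain ⟨t', ht'⟩ : ∃ t' : AX⟦(1:ℤ)⟧ ⟶ W, w = vα ≫ t' :=
          Triangle.yoneda_exact₃ _ hZtri w h2
        have h3 : vσ ≫ ((shiftFunctor C (1:ℤ)).map φX ≫ t') = 0 := by
          rw [← Category.assoc, hφ₂, Category.assoc, ← ht', hw]
        obtain ⟨s', hs'⟩ : ∃ s' : TY⟦(1:ℤ)⟧ ⟶ W, (shiftFunctor C (1:ℤ)).map φX ≫ t' =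
            (-(shiftFunctor C (1:ℤ)).map (rX ≫ f ≫ iY)) ≫ s' :=
          Triangle.yoneda_exact₃ _ (rot_of_distTriang _ hσ)
          ((shiftFunctor C (1:ℤ)).map φX ≫ t') h3
        obtain ⟨s'', hs''⟩ := hbijY1.2 s'
        dsimp at hs''
        have h4 : (shiftFunctor C (1:ℤ)).map φX ≫ t' =
            (shiftFunctor C (1:ℤ)).map φX ≫ (-((shiftFunctor C (1:ℤ)).map α ≫ s'')) := by
          rw [hs', ← hs'']
          simp only [Preadditive.neg_comp, Preadditive.comp_neg, neg_inj,
            ← Functor.map_comp_assoc]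
          rw [hα']
        have h5 : t' = -((shiftFunctor C (1:ℤ)).map α ≫ s'') := hbijX1.1 h4
        rw [ht', h5, Preadditive.comp_neg, ← Category.assoc, hz31, zero_comp, neg_zero]
      constructor
      · intro v₁ v₂ hv
        have hv' : φ ≫ v₁ = φ ≫ v₂ := hv
        have : φ ≫ (v₁ - v₂) = 0 := by
          rw [Preadditive.comp_sub, hv', sub_self]
        have := hker _ this
        rw [← sub_eq_zero]; exact this
      · intro q
        obtain ⟨vY, hvY⟩ := (hbijY W hWY).2 (uσ ≫ q)
        have hvY' : φY ≫ vY = uσ ≫ q := hvY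
        have h0 : φX ≫ (α ≫ vY) = φX ≫ 0 := by
          rw [comp_zero, ← Category.assoc, hα', Category.assoc, hvY', ← Category.assoc,
            hz12, zero_comp]
        have hαvY : α ≫ vY = 0 := (hbijX W hWX).1 h0
        obtain ⟨v₀, hv₀⟩ : ∃ v₀ : Z ⟶ W, vY = uα ≫ v₀ :=
          Triangle.yoneda_exact₂ _ hZtri vY hαvY
        have hd : uσ ≫ (q - (φ ≫ v₀ : Cσ ⟶ W)) = 0 := by
          rw [Preadditive.comp_sub, ← Category.assoc, hφ₁, Category.assoc, ← hv₀, hvY',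
            sub_self]
        obtain ⟨g', hg'⟩ : ∃ g' : TX⟦(1:ℤ)⟧ ⟶ W, q - (φ ≫ v₀ : Cσ ⟶ W) = vσ ≫ g' :=
          Triangle.yoneda_exact₃ _ hσ (q - (φ ≫ v₀ : Cσ ⟶ W)) hd
        obtain ⟨t₁, ht₁⟩ := hbijX1.2 g'
        dsimp at ht₁
        have hlast : (φ ≫ vα ≫ t₁ : Cσ ⟶ W) = q - (φ ≫ v₀ : Cσ ⟶ W) := by
          rw [← Category.assoc, ← hφ₂, Category.assoc, ht₁, ← hg']
        refine ⟨(show Z ⟶ W from v₀) + vα ≫ t₁, ?_⟩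
        show φ ≫ ((show Z ⟶ W from v₀) + vα ≫ t₁) = q
        have expand : φ ≫ ((show Z ⟶ W from v₀) + vα ≫ t₁)
            = (φ ≫ v₀ : Cσ ⟶ W) + (φ ≫ vα ≫ t₁ : Cσ ⟶ W) :=
          Preadditive.comp_add _ _ _ _ _ _
        rw [expand, hlast]
        abel

lemma addClosure_subset {T : Set C} (hT : IsThick T) {S : Set C} (hS : S ⊆ T) :
    ∀ {X : C}, addClosure S X → X ∈ T := by
  intro X hX
  induction hX with
  | of h => exact hS h
  | zero h => exact hT.zero _ h
  | iso e h ih => exact hT.iso e ih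
  | shift k h ih => exact hT.shift _ k ih
  | biprod hX hY ihX ihY =>
    exact hT.ext₂ _ (binaryBiproductTriangle_distinguished _ _) ihX ihY
  | retract i r hir h ih => exact hT.retract i r hir ih

lemma coneSet_subset {T : Set C} (hT : IsThick T) {A B : Set C} (hA : A ⊆ T) (hB : B ⊆ T) :
    coneSet A B ⊆ T := by
  rintro E ⟨X, Y, f, g, h, htri, hX, hY⟩
  exact hT.ext₂ _ (rot_of_distTriang _ htri) (hB hY) (hT.shift X 1 (hA hX))

lemma level_subset_thick {T : Set C} (hT : IsThick T) {G : C} (hG : G ∈ T) :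
    ∀ n : ℕ, level ({G} : Set C) n ⊆ T := by
  have hsing : ({G} : Set C) ⊆ T := by
    intro x hx
    rw [Set.mem_singleton_iff] at hx
    subst hx; exact hG
  intro n
  induction n with
  | zero =>
    intro X hX
    exact addClosure_subset hT (Set.empty_subset T) hX
  | succ k ih =>
    cases k with
    | zero =>
      intro X hX
      exact addClosure_subset hT hsing hX
    | succ k' =>
      intro X hX
      exact addClosure_subset hT
        (coneSet_subset hT ih (fun _ h => addClosure_subset hT hsing h)) hX

lemma level_retract {S : Set C} {n : ℕ} {E A : C} (i : E ⟶ A) (r : A ⟶ E)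
    (hir : i ≫ r = 𝟙 E) (hA : A ∈ level S n) : E ∈ level S n := by
  match n with
  | 0 => exact addClosure.retract i r hir hA
  | 1 => exact addClosure.retract i r hir hA
  | (k+2) => exact addClosure.retract i r hir hA

end S10


open Paper in
/-- For a Noetherian stack satisfying approximation by compact complexes (abstracted:
a triangulated category with a bounded subcategory `Db` (= `D^b_coh`), a subcategory
`Perf` of `Db` approximating every object of `Db` in all degrees, and `G ∈ Db` whose
thick closure approximates every object of `Db`): `Perf ⊆ ⟨G⟩ₙ` iff `⟨G⟩ₙ = Db`. -/
theorem statement10 {C : Type u} [Category.{v} C] [Preadditive C] [HasZeroObject C]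
    [HasShift C ℤ] [∀ n : ℤ, (shiftFunctor C n).Additive] [Pretriangulated C]
    [HasBinaryBiproducts C] [HasCountableCoproducts C]
    (t : Triangulated.TStructure C) (Db Perf : Set C)
    (hDb : IsThick Db) (hPerf : Perf ⊆ Db)
    (hbounded : ∀ E ∈ Db, ∃ a b : ℤ, t.ge a E ∧ t.le b E)
    (G : C) (hG : G ∈ Db) (n : ℕ)
    (happroxG : ∀ E ∈ Db, ∀ m : ℤ, ∃ P ∈ thickClosure ({G} : Set C),
      ∃ p : P ⟶ E, IsMIso t m p)
    (happroxPerf : ∀ E ∈ Db, ∀ m : ℤ, ∃ P ∈ Perf, ∃ p : P ⟶ E, IsMIso t m p) :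
    Perf ⊆ level ({G} : Set C) n ↔ level ({G} : Set C) n = Db := by
  constructor
  · intro hPerfLevel
    have hsub : level ({G} : Set C) n ⊆ Db := S10.level_subset_thick hDb hG n
    refine Set.Subset.antisymm hsub ?_
    intro E hE
    obtain ⟨a, b, hGEa, _⟩ := hbounded E hE
    obtain ⟨aG, bG, haG, hbG⟩ := hbounded G hG
    obtain ⟨c, hc0, hdec⟩ := S10.decIso_level t haG hbG n
    obtain ⟨P, hPmem, p, hmiso⟩ := happroxPerf E hE (a - 2*c - 2)
    obtain ⟨Q, g, h', htri, hQ⟩ := hmiso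
    obtain ⟨T, A, i, r, φ, hir, hAmem, hAge, hbij⟩ :=
      hdec P (hPerfLevel hPmem) ((a - 2*c - 2) + c + 1)
    have hAge' : t.ge ((a - 2*c - 2) + 1) A := by
      have e : (a - 2*c - 2) + c + 1 - c = (a - 2*c - 2) + 1 := by omega
      rw [← e]; exact hAge
    have hQm : t.le (a - 2*c - 2) ((Q)⟦(-1:ℤ)⟧) :=
      t.le_shift ((a - 2*c - 2) - 1) (-1) (a - 2*c - 2) (by omega) Q hQ
    have hinv := inv_rot_of_distTriang _ htri
    have hwφ : (Triangle.mk p g h').invRotate.mor₁ ≫ (i ≫ φ) = 0 :=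
      S10.tzero t _ (show (a - 2*c - 2) < (a - 2*c - 2) + 1 by omega) hQm hAge'
    obtain ⟨u0, hu⟩ := Triangle.yoneda_exact₂ _ hinv (i ≫ φ) hwφ
    let u : E ⟶ A := u0
    have hpu : p ≫ u = i ≫ φ := hu.symm
    have hEge : t.ge ((a - 2*c - 2) + c + 1 + c) E := S10.ge_mono t (by omega) hGEa
    obtain ⟨vv, hvv⟩ := (hbij E hEge).2 (r ≫ p)
    have hvv' : φ ≫ vv = r ≫ p := hvv
    have hfinal : p ≫ (u ≫ vv) = p := by
      rw [← Category.assoc, hpu, Category.assoc, hvv', ← Category.assoc, hir,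
        Category.id_comp]
    have hζ : p ≫ (u ≫ vv - 𝟙 E) = 0 := by
      rw [Preadditive.comp_sub, hfinal, Category.comp_id, sub_self]
    obtain ⟨s, hs⟩ := Triangle.yoneda_exact₂ _ htri (u ≫ vv - 𝟙 E) hζ
    have hs0 : s = 0 := S10.tzero t s (show (a - 2*c - 2) - 1 < a by omega) hQ hGEa
    have huv : u ≫ vv = 𝟙 E := by
      rw [hs0, comp_zero] at hs
      exact sub_eq_zero.1 hs
    exact S10.level_retract u vv huv hAmem
  · intro h
    rw [h]
    exact hPerf
end
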